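/- Let ℓ ≥ 1 be an integer and let K, T, X, Y be finite-valued random variables such that: K is uniformly distributed on a set of cardinality 2^ℓ; K is independent of T; Y is conditionally independent of K given (X,T); and K̂ = φ(Y,T) for a deterministic function φ. Let P_s = P(K̂ = K). Then f_P(P_s) ≤ I(X;Y|T), where f_P(p) = ℓ − H₂(p) − (1−p)·log₂(2^ℓ − 1). -/

import Mathlib

open MeasureTheory

namespace SCA

variable {Ω : Type*} [MeasurableSpace Ω]

/-- `pr μ X x` is the probability `P(X = x)`. -/
noncomputable def pr (μ : Measure Ω) {S : Type*} (X : Ω → S) (x : S) : ℝ :=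
  (μ (X ⁻¹' {x})).toReal

/-- Shannon entropy `H(X)` (base-2 logarithm), with the convention `0 · log 0 = 0`. -/
noncomputable def ent (μ : Measure Ω) {S : Type*} [Fintype S] (X : Ω → S) : ℝ :=
  -∑ x : S, pr μ X x * Real.logb 2 (pr μ X x)

/-- Conditional Shannon entropy `H(X | Y)`. -/
noncomputable def condEnt (μ : Measure Ω) {S T : Type*} [Fintype S] [Fintype T]
    (X : Ω → S) (Y : Ω → T) : ℝ :=
  ent μ (fun ω => (X ω, Y ω)) - ent μ Y

/-- Mutual information `I(X; Y)`. -/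
noncomputable def mi (μ : Measure Ω) {S T : Type*} [Fintype S] [Fintype T]
    (X : Ω → S) (Y : Ω → T) : ℝ :=
  ent μ X + ent μ Y - ent μ (fun ω => (X ω, Y ω))

/-- Conditional mutual information `I(X; Y | Z)`. -/
noncomputable def cmi (μ : Measure Ω) {S T U : Type*} [Fintype S] [Fintype T] [Fintype U]
    (X : Ω → S) (Y : Ω → T) (Z : Ω → U) : ℝ :=
  ent μ (fun ω => (X ω, Z ω)) + ent μ (fun ω => (Y ω, Z ω))
    - ent μ (fun ω => (X ω, Y ω, Z ω)) - ent μ Z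

/-- `B` is conditionally independent of `A` given `C`:
`P(A = a, B = b | C = c) = P(A = a | C = c) · P(B = b | C = c)` whenever `P(C = c) > 0`,
written multiplicatively to avoid division. -/
def CondIndepGiven (μ : Measure Ω) {α β γ : Type*}
    (B : Ω → β) (A : Ω → α) (C : Ω → γ) : Prop :=
  ∀ a b c, 0 < pr μ C c →
    pr μ (fun ω => (A ω, B ω, C ω)) (a, b, c) * pr μ C c =
      pr μ (fun ω => (A ω, C ω)) (a, c) * pr μ (fun ω => (B ω, C ω)) (b, c)

/-- Independence of two random variables. -/
def IndepRV (μ : Measure Ω) {α β : Type*} (A : Ω → α) (B : Ω → β) : Prop :=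
  ∀ a b, pr μ (fun ω => (A ω, B ω)) (a, b) = pr μ A a * pr μ B b

/-- The binary entropy function `H₂(p)`, with `H₂(0) = H₂(1) = 0` by the
convention `Real.logb 2 0 = 0`. -/
noncomputable def binEnt (p : ℝ) : ℝ :=
  -(p * Real.logb 2 p) - (1 - p) * Real.logb 2 (1 - p)

/-- The function `f_P(p) = ℓ − H₂(p) − (1 − p) log₂(2^ℓ − 1)` from Fano's inequality. -/
noncomputable def fP (ℓ : ℕ) (p : ℝ) : ℝ :=
  (ℓ : ℝ) - binEnt p - (1 - p) * Real.logb 2 ((2 : ℝ) ^ ℓ - 1)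

/-- Shannon entropy of a probability mass function. -/
noncomputable def entPMF {S : Type*} [Fintype S] (p : S → ℝ) : ℝ :=
  -∑ x : S, p x * Real.logb 2 (p x)

/-- Mutual information `I(X'; Y')` where `X'` has law `P` and `Y'` is obtained by
passing `X'` through the channel `W`. -/
noncomputable def miChannel {𝒳 𝒴 : Type*} [Fintype 𝒳] [Fintype 𝒴]
    (P : 𝒳 → ℝ) (W : 𝒳 → 𝒴 → ℝ) : ℝ :=
  entPMF P + entPMF (fun y => ∑ x, P x * W x y)
    - entPMF (fun xy : 𝒳 × 𝒴 => P xy.1 * W xy.1 xy.2)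




/-- Gibbs' inequality. -/
lemma gibbs {ι : Type*} [Fintype ι] (p u : ι → ℝ) (hp0 : ∀ i, 0 ≤ p i)
    (hu0 : ∀ i, 0 ≤ u i) (hpu : ∀ i, 0 < p i → 0 < u i)
    (hu1 : ∑ i, u i ≤ 1) (hp1 : ∑ i, p i = 1) :
    ∑ i, p i * Real.logb 2 (u i) ≤ ∑ i, p i * Real.logb 2 (p i) := by
  have hlog2 : (0:ℝ) < Real.log 2 := Real.log_pos (by norm_num)
  have key : ∀ i, p i * Real.logb 2 (u i) - p i * Real.logb 2 (p i)
      ≤ (u i - p i) / Real.log 2 := by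
    intro i
    rcases eq_or_lt_of_le (hp0 i) with h0 | hpos
    · rw [← h0]
      simpa using div_nonneg (hu0 i) hlog2.le
    · have hu : 0 < u i := hpu i hpos
      have h1 : Real.log (u i / p i) ≤ u i / p i - 1 :=
        Real.log_le_sub_one_of_pos (by positivity)
      have h2 : Real.log (u i) - Real.log (p i) ≤ u i / p i - 1 := by
        rwa [Real.log_div (ne_of_gt hu) (ne_of_gt hpos)] at h1
      have : p i * (Real.log (u i) - Real.log (p i)) ≤ u i - p i := by
        have := mul_le_mul_of_nonneg_left h2 (le_of_lt hpos)
        calc p i * (Real.log (u i) - Real.log (p i)) ≤ p i * (u i / p i - 1) := this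
          _ = u i - p i := by field_simp
      rw [Real.logb, Real.logb, div_eq_mul_inv, div_eq_mul_inv]
      calc p i * (Real.log (u i) * (Real.log 2)⁻¹) - p i * (Real.log (p i) * (Real.log 2)⁻¹)
          = (p i * (Real.log (u i) - Real.log (p i))) * (Real.log 2)⁻¹ := by ring
        _ ≤ (u i - p i) * (Real.log 2)⁻¹ := by
            apply mul_le_mul_of_nonneg_right this (by positivity)
  have hs := Finset.sum_le_sum (fun (i:ι) (_ : i ∈ Finset.univ) => key i)
  rw [Finset.sum_sub_distrib] at hs
  have h3 : ∑ i, (u i - p i) / Real.log 2 = (∑ i, u i - 1) / Real.log 2 := by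
    rw [← Finset.sum_div, Finset.sum_sub_distrib, hp1]
  have h4 : (∑ i, u i - 1) / Real.log 2 ≤ 0 := by
    apply div_nonpos_of_nonpos_of_nonneg (by linarith) (le_of_lt hlog2)
  linarith




section PMap
variable {S : Type*} [Fintype S]

/-- pushforward pmf -/
noncomputable def pmap (q : S → ℝ) {U : Type*} [Fintype U] [DecidableEq U]
    (g : S → U) (u : U) : ℝ :=
  ∑ s, if g s = u then q s else 0

lemma pmap_nonneg {q : S → ℝ} (hq0 : ∀ s, 0 ≤ q s) {U : Type*} [Fintype U] [DecidableEq U]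
    (g : S → U) (u : U) : 0 ≤ pmap q g u := by
  apply Finset.sum_nonneg
  intro s _
  split
  · exact hq0 s
  · exact le_refl 0

lemma sum_pmap (q : S → ℝ) {U : Type*} [Fintype U] [DecidableEq U] (g : S → U) :
    ∑ u, pmap q g u = ∑ s, q s := by
  unfold pmap
  rw [Finset.sum_comm]
  apply Finset.sum_congr rfl
  intro s _
  rw [Finset.sum_ite_eq]
  simp

lemma pmap_pmap (q : S → ℝ) {U V : Type*} [Fintype U] [DecidableEq U]
    [Fintype V] [DecidableEq V] (g : S → U) (π : U → V) :
    pmap (pmap q g) π = pmap q (fun s => π (g s)) := by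
  funext v
  show (∑ u : U, if π u = v then pmap q g u else 0) = ∑ s : S, if π (g s) = v then q s else 0
  have h0 : ∀ u, (if π u = v then pmap q g u else 0)
      = ∑ s, if g s = u then (if π (g s) = v then q s else 0) else 0 := by
    intro u
    unfold pmap
    by_cases h : π u = v
    · rw [if_pos h]
      apply Finset.sum_congr rfl
      intro s _
      by_cases hg : g s = u
      · subst hg; simp [h]
      · simp [hg]
    · rw [if_neg h]
      symm
      apply Finset.sum_eq_zero
      intro s _
      by_cases hg : g s = u
      · subst hg; simp [h]
      · simp [hg]
  rw [Finset.sum_congr rfl (fun u _ => h0 u), Finset.sum_comm]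
  apply Finset.sum_congr rfl
  intro s _
  rw [Finset.sum_ite_eq]
  simp

lemma le_pmap_self {q : S → ℝ} (hq0 : ∀ s, 0 ≤ q s) {U : Type*} [Fintype U] [DecidableEq U]
    (g : S → U) (s : S) : q s ≤ pmap q g (g s) := by
  unfold pmap
  have := Finset.single_le_sum (f := fun t => if g t = g s then q t else 0)
    (fun t _ => by split; exacts [hq0 t, le_refl 0]) (Finset.mem_univ s)
  simpa using this

lemma pmap_pos_elim {q : S → ℝ} {U : Type*} [Fintype U] [DecidableEq U]
    {g : S → U} {u : U} (h : pmap q g u ≠ 0) : ∃ s, q s ≠ 0 ∧ g s = u := by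
  by_contra hc
  push_neg at hc
  apply h
  apply Finset.sum_eq_zero
  intro s _
  by_cases hg : g s = u
  · have hq : q s = 0 := by
      by_contra hq
      exact hc s hq hg
    simp [hg, hq]
  · simp [hg]

/-- reindexing sums through a map -/
lemma sum_mul_comp (w : S → ℝ) {U : Type*} [Fintype U] [DecidableEq U]
    (π : S → U) (F : U → ℝ) :
    ∑ s, w s * F (π s) = ∑ u, pmap w π u * F u := by
  have h0 : ∀ u, pmap w π u * F u = ∑ s, (if π s = u then w s else 0) * F u := by
    intro u
    unfold pmap
    rw [Finset.sum_mul]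
  rw [Finset.sum_congr rfl (fun u _ => h0 u), Finset.sum_comm]
  apply Finset.sum_congr rfl
  intro s _
  have h1 : ∀ u, (if π s = u then w s else 0) * F u
      = (if π s = u then w s * F (π s) else 0) := by
    intro u
    by_cases h : π s = u
    · subst h; simp
    · simp [h]
  rw [Finset.sum_congr rfl (fun u _ => h1 u), Finset.sum_ite_eq]
  simp

end PMap

section Ent
variable {S : Type*} [Fintype S]

lemma pmap_prod_snd {A C : Type*} [Fintype A] [DecidableEq A] [Fintype C] [DecidableEq C]
    (v : A × C → ℝ) (c : C) : pmap v Prod.snd c = ∑ a, v (a, c) := by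
  unfold pmap
  rw [Fintype.sum_prod_type]
  apply Finset.sum_congr rfl
  intro a _
  rw [Finset.sum_ite_eq']
  simp

/-- H(f(W)) ≤ H(W). -/
lemma entPMF_pmap_le {w : S → ℝ} (hw0 : ∀ s, 0 ≤ w s) {U : Type*} [Fintype U]
    [DecidableEq U] (π : S → U) : entPMF (pmap w π) ≤ entPMF w := by
  unfold entPMF
  have key : ∑ s, w s * Real.logb 2 (w s) ≤ ∑ s, w s * Real.logb 2 (pmap w π (π s)) := by
    apply Finset.sum_le_sum
    intro s _
    rcases eq_or_lt_of_le (hw0 s) with h0 | hpos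
    · rw [← h0]; simp
    · apply mul_le_mul_of_nonneg_left _ (le_of_lt hpos)
      exact Real.logb_le_logb_of_le (by norm_num : (1:ℝ) < 2) hpos (le_pmap_self hw0 π s)
  rw [sum_mul_comp w π (fun u => Real.logb 2 (pmap w π u))] at key
  linarith

/-- entropy invariant under injective postcomposition -/
lemma entPMF_pmap_comp_inj (q : S → ℝ) {U V : Type*} [Fintype U] [DecidableEq U]
    [Fintype V] [DecidableEq V] (g : S → U) (σ : U → V) (hσ : Function.Injective σ) :
    entPMF (pmap q (fun s => σ (g s))) = entPMF (pmap q g) := by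
  rw [← pmap_pmap q g σ]
  set p := pmap q g with hp
  unfold entPMF
  congr 1
  have hker : ∀ u, pmap p σ (σ u) = p u := by
    intro u
    unfold pmap
    have : ∀ u', (if σ u' = σ u then p u' else 0) = (if u' = u then p u' else 0) := by
      intro u'
      simp [hσ.eq_iff]
    rw [Finset.sum_congr rfl fun u' _ => this u', Finset.sum_ite_eq']
    simp
  have hzero : ∀ v : V, v ∉ Finset.univ.image σ → pmap p σ v * Real.logb 2 (pmap p σ v) = 0 := by
    intro v hv
    have : pmap p σ v = 0 := by
      apply Finset.sum_eq_zero
      intro u _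
      rw [if_neg]
      intro h
      exact hv (Finset.mem_image.2 ⟨u, Finset.mem_univ u, h⟩)
    rw [this]; simp
  rw [← Finset.sum_subset (Finset.subset_univ (Finset.univ.image σ)) (fun v _ hv => hzero v hv),
    Finset.sum_image (fun a _ b _ h => hσ h)]
  apply Finset.sum_congr rfl
  intro u _
  rw [hker]

/-- Subadditivity: H(A,B) ≤ H(A) + H(B). -/
lemma entPMF_subadd {A B : Type*} [Fintype A] [DecidableEq A] [Fintype B] [DecidableEq B]
    (w : A × B → ℝ) (hw0 : ∀ x, 0 ≤ w x) (hw1 : ∑ x, w x = 1) :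
    entPMF w ≤ entPMF (pmap w Prod.fst) + entPMF (pmap w Prod.snd) := by
  set pA := pmap w Prod.fst with hpA
  set pB := pmap w Prod.snd with hpB
  have key := gibbs w (fun x => pA x.1 * pB x.2) hw0
    (fun x => mul_nonneg (pmap_nonneg hw0 _ _) (pmap_nonneg hw0 _ _))
    (fun x hx => mul_pos (lt_of_lt_of_le hx (le_pmap_self hw0 Prod.fst x))
      (lt_of_lt_of_le hx (le_pmap_self hw0 Prod.snd x)))
    (by
      rw [Fintype.sum_prod_type]
      have : ∀ a : A, ∑ b, pA a * pB b = pA a * ∑ b, pB b := by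
        intro a; rw [Finset.mul_sum]
      rw [Finset.sum_congr rfl fun a _ => this a]
      rw [sum_pmap, hw1]
      simp only [mul_one]
      rw [sum_pmap, hw1])
    hw1
  have split : ∑ x, w x * Real.logb 2 (pA x.1 * pB x.2)
      = ∑ x, w x * Real.logb 2 (pA x.1) + ∑ x, w x * Real.logb 2 (pB x.2) := by
    rw [← Finset.sum_add_distrib]
    apply Finset.sum_congr rfl
    intro x _
    rcases eq_or_lt_of_le (hw0 x) with h0 | hpos
    · rw [← h0]; ring
    · have h1 : pA x.1 ≠ 0 := ne_of_gt (lt_of_lt_of_le hpos (le_pmap_self hw0 Prod.fst x))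
      have h2 : pB x.2 ≠ 0 := ne_of_gt (lt_of_lt_of_le hpos (le_pmap_self hw0 Prod.snd x))
      rw [Real.logb_mul h1 h2]
      ring
  rw [split, sum_mul_comp w Prod.fst (fun a => Real.logb 2 (pA a)),
    sum_mul_comp w Prod.snd (fun b => Real.logb 2 (pB b))] at key
  show -∑ x : A × B, w x * Real.logb 2 (w x)
      ≤ -∑ a : A, pA a * Real.logb 2 (pA a) + -∑ b : B, pB b * Real.logb 2 (pB b)
  linarith

/-- Submodularity: H(A,B,C) + H(C) ≤ H(A,C) + H(B,C). -/
lemma entPMF_submod {A B C : Type*} [Fintype A] [DecidableEq A] [Fintype B] [DecidableEq B]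
    [Fintype C] [DecidableEq C] (w : A × B × C → ℝ) (hw0 : ∀ x, 0 ≤ w x)
    (hw1 : ∑ x, w x = 1) :
    entPMF w + entPMF (pmap w (fun x => x.2.2))
      ≤ entPMF (pmap w (fun x => (x.1, x.2.2))) + entPMF (pmap w (fun x => x.2)) := by
  set pAC := pmap w (fun x : A × B × C => (x.1, x.2.2)) with hpAC
  set pBC := pmap w (fun x : A × B × C => x.2) with hpBC
  set pC := pmap w (fun x : A × B × C => x.2.2) with hpC
  have hAC0 : ∀ y, 0 ≤ pAC y := pmap_nonneg hw0 _
  have hBC0 : ∀ y, 0 ≤ pBC y := pmap_nonneg hw0 _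
  have hC0 : ∀ c, 0 ≤ pC c := pmap_nonneg hw0 _
  have hmA : ∀ c, ∑ a, pAC (a, c) = pC c := by
    intro c
    rw [← pmap_prod_snd pAC c]
    have := congrFun (pmap_pmap w (fun x : A × B × C => (x.1, x.2.2)) Prod.snd) c
    exact this
  have hmB : ∀ c, ∑ b, pBC (b, c) = pC c := by
    intro c
    rw [← pmap_prod_snd pBC c]
    have := congrFun (pmap_pmap w (fun x : A × B × C => x.2) Prod.snd) c
    exact this
  set u : A × B × C → ℝ := fun x => if w x = 0 then 0 else pAC (x.1, x.2.2) * pBC x.2 / pC x.2.2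
    with hu
  have hu0 : ∀ x, 0 ≤ u x := by
    intro x
    rw [hu]
    dsimp only
    split
    · exact le_refl 0
    · exact div_nonneg (mul_nonneg (hAC0 _) (hBC0 _)) (hC0 _)
  have hwle : ∀ x : A × B × C, w x ≤ pAC (x.1, x.2.2) :=
    fun x => le_pmap_self hw0 (fun x : A × B × C => (x.1, x.2.2)) x
  have hwle2 : ∀ x : A × B × C, w x ≤ pBC x.2 :=
    fun x => le_pmap_self hw0 (fun x : A × B × C => x.2) x
  have hwle3 : ∀ x : A × B × C, w x ≤ pC x.2.2 :=
    fun x => le_pmap_self hw0 (fun x : A × B × C => x.2.2) x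
  have hpu : ∀ x, 0 < w x → 0 < u x := by
    intro x hx
    rw [hu]
    dsimp only
    rw [if_neg (ne_of_gt hx)]
    exact div_pos (mul_pos (lt_of_lt_of_le hx (hwle x)) (lt_of_lt_of_le hx (hwle2 x)))
      (lt_of_lt_of_le hx (hwle3 x))
  have hu1 : ∑ x, u x ≤ 1 := by
    have step1 : ∀ x : A × B × C, u x ≤ pAC (x.1, x.2.2) * pBC x.2 / pC x.2.2 := by
      intro x
      rw [hu]
      dsimp only
      split
      · exact div_nonneg (mul_nonneg (hAC0 _) (hBC0 _)) (hC0 _)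
      · exact le_refl _
    have swap : ∀ F : A × B × C → ℝ, ∑ x, F x = ∑ c, ∑ a, ∑ b, F (a, b, c) := by
      intro F
      rw [Fintype.sum_prod_type]
      have h1 : ∀ a : A, ∑ y : B × C, F (a, y) = ∑ c, ∑ b, F (a, b, c) := by
        intro a
        rw [Fintype.sum_prod_type]
        exact Finset.sum_comm
      rw [Finset.sum_congr rfl fun a _ => h1 a]
      exact Finset.sum_comm
    calc ∑ x, u x ≤ ∑ x : A × B × C, pAC (x.1, x.2.2) * pBC x.2 / pC x.2.2 :=
          Finset.sum_le_sum fun x _ => step1 x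
      _ = ∑ c : C, ∑ a : A, ∑ b : B, pAC (a, c) * pBC (b, c) / pC c :=
          swap (fun x => pAC (x.1, x.2.2) * pBC x.2 / pC x.2.2)
      _ = ∑ c : C, pC c * pC c / pC c := by
          apply Finset.sum_congr rfl
          intro c _
          have hstep : ∑ a : A, ∑ b : B, pAC (a, c) * pBC (b, c) / pC c
              = ((∑ a : A, pAC (a, c)) * (∑ b : B, pBC (b, c))) / pC c := by
            rw [Finset.sum_mul_sum, Finset.sum_div]
            apply Finset.sum_congr rfl
            intro a _
            rw [Finset.sum_div]
          rw [hstep, hmA c, hmB c]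
      _ ≤ ∑ c : C, pC c := by
          apply Finset.sum_le_sum
          intro c _
          rcases eq_or_lt_of_le (hC0 c) with h0 | hpos
          · rw [← h0]; simp
          · rw [mul_div_assoc, div_self (ne_of_gt hpos), mul_one]
      _ = 1 := by rw [hpC, sum_pmap, hw1]
  have key := gibbs w u hw0 hu0 hpu hu1 hw1
  have split : ∑ x, w x * Real.logb 2 (u x)
      = ∑ x : A × B × C, w x * Real.logb 2 (pAC (x.1, x.2.2))
        + ∑ x : A × B × C, w x * Real.logb 2 (pBC x.2)
        - ∑ x : A × B × C, w x * Real.logb 2 (pC x.2.2) := by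
    rw [← Finset.sum_add_distrib, ← Finset.sum_sub_distrib]
    apply Finset.sum_congr rfl
    intro x _
    rcases eq_or_lt_of_le (hw0 x) with h0 | hpos
    · rw [← h0]; ring
    · have h1 : pAC (x.1, x.2.2) ≠ 0 := ne_of_gt (lt_of_lt_of_le hpos (hwle x))
      have h2 : pBC x.2 ≠ 0 := ne_of_gt (lt_of_lt_of_le hpos (hwle2 x))
      have h3 : pC x.2.2 ≠ 0 := ne_of_gt (lt_of_lt_of_le hpos (hwle3 x))
      rw [hu]
      dsimp only
      rw [if_neg (ne_of_gt hpos), Real.logb_div (mul_ne_zero h1 h2) h3, Real.logb_mul h1 h2]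
      ring
  have e1 : ∑ x : A × B × C, w x * Real.logb 2 (pAC (x.1, x.2.2))
      = ∑ y : A × C, pAC y * Real.logb 2 (pAC y) :=
    sum_mul_comp w (fun x : A × B × C => (x.1, x.2.2)) (fun y => Real.logb 2 (pAC y))
  have e2 : ∑ x : A × B × C, w x * Real.logb 2 (pBC x.2)
      = ∑ y : B × C, pBC y * Real.logb 2 (pBC y) :=
    sum_mul_comp w (fun x : A × B × C => x.2) (fun y => Real.logb 2 (pBC y))
  have e3 : ∑ x : A × B × C, w x * Real.logb 2 (pC x.2.2)
      = ∑ c : C, pC c * Real.logb 2 (pC c) :=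
    sum_mul_comp w (fun x : A × B × C => x.2.2) (fun c => Real.logb 2 (pC c))
  rw [split, e1, e2, e3] at key
  show -∑ x : A × B × C, w x * Real.logb 2 (w x) + -∑ c : C, pC c * Real.logb 2 (pC c)
      ≤ -∑ y : A × C, pAC y * Real.logb 2 (pAC y) + -∑ y : B × C, pBC y * Real.logb 2 (pBC y)
  linarith

/-- Fano counting bound: H(A,B) − H(B) ≤ ∑_b P(B=b) log N(b). -/
lemma entPMF_fano_count {A B : Type*} [Fintype A] [DecidableEq A] [Fintype B] [DecidableEq B]
    (w : A × B → ℝ) (hw0 : ∀ x, 0 ≤ w x) (hw1 : ∑ x, w x = 1)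
    (N : B → ℝ) (hN : ∀ b, 1 ≤ N b)
    (hcount : ∀ b, ((Finset.univ.filter fun a => w (a, b) ≠ 0).card : ℝ) ≤ N b) :
    entPMF w ≤ entPMF (pmap w Prod.snd) + ∑ b, pmap w Prod.snd b * Real.logb 2 (N b) := by
  set pB := pmap w Prod.snd with hpB
  have hB0 : ∀ b, 0 ≤ pB b := pmap_nonneg hw0 _
  have hwle : ∀ x : A × B, w x ≤ pB x.2 := fun x => le_pmap_self hw0 Prod.snd x
  have hNpos : ∀ b, 0 < N b := fun b => lt_of_lt_of_le one_pos (hN b)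
  set u : A × B → ℝ := fun x => if w x = 0 then 0 else pB x.2 / N x.2 with hu
  have hu0 : ∀ x, 0 ≤ u x := by
    intro x
    rw [hu]; dsimp only
    split
    · exact le_refl 0
    · exact div_nonneg (hB0 _) (le_of_lt (hNpos _))
  have hpu : ∀ x, 0 < w x → 0 < u x := by
    intro x hx
    rw [hu]; dsimp only
    rw [if_neg (ne_of_gt hx)]
    exact div_pos (lt_of_lt_of_le hx (hwle x)) (hNpos _)
  have hu1 : ∑ x, u x ≤ 1 := by
    calc ∑ x, u x = ∑ b : B, ∑ a : A, u (a, b) := by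
          rw [Fintype.sum_prod_type, Finset.sum_comm]
      _ ≤ ∑ b : B, pB b := by
          apply Finset.sum_le_sum
          intro b _
          have : ∀ a : A, u (a, b) = if w (a, b) ≠ 0 then pB b / N b else 0 := by
            intro a
            rw [hu]; dsimp only
            by_cases h : w (a, b) = 0 <;> simp [h]
          rw [Finset.sum_congr rfl fun a _ => this a, ← Finset.sum_filter,
            Finset.sum_const, nsmul_eq_mul]
          calc ((Finset.univ.filter fun a => w (a, b) ≠ 0).card : ℝ) * (pB b / N b)
              ≤ N b * (pB b / N b) :=
                mul_le_mul_of_nonneg_right (hcount b)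
                  (div_nonneg (hB0 b) (le_of_lt (hNpos b)))
            _ = pB b := by
                have hne := ne_of_gt (hNpos b)
                field_simp
      _ = 1 := by rw [hpB, sum_pmap, hw1]
  have key := gibbs w u hw0 hu0 hpu hu1 hw1
  have split : ∑ x, w x * Real.logb 2 (u x)
      = ∑ x : A × B, w x * Real.logb 2 (pB x.2)
        - ∑ x : A × B, w x * Real.logb 2 (N x.2) := by
    rw [← Finset.sum_sub_distrib]
    apply Finset.sum_congr rfl
    intro x _
    rcases eq_or_lt_of_le (hw0 x) with h0 | hpos
    · rw [← h0]; ring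
    · have h1 : pB x.2 ≠ 0 := ne_of_gt (lt_of_lt_of_le hpos (hwle x))
      rw [hu]; dsimp only
      rw [if_neg (ne_of_gt hpos), Real.logb_div h1 (ne_of_gt (hNpos _))]
      ring
  have e1 : ∑ x : A × B, w x * Real.logb 2 (pB x.2)
      = ∑ b : B, pB b * Real.logb 2 (pB b) :=
    sum_mul_comp w Prod.snd (fun b => Real.logb 2 (pB b))
  have e2 : ∑ x : A × B, w x * Real.logb 2 (N x.2)
      = ∑ b : B, pB b * Real.logb 2 (N b) :=
    sum_mul_comp w Prod.snd (fun b => Real.logb 2 (N b))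
  rw [split, e1, e2] at key
  show -∑ x : A × B, w x * Real.logb 2 (w x)
      ≤ -∑ b : B, pB b * Real.logb 2 (pB b) + ∑ b, pB b * Real.logb 2 (N b)
  linarith

lemma pmap_prod_fst {A C : Type*} [Fintype A] [DecidableEq A] [Fintype C] [DecidableEq C]
    (v : A × C → ℝ) (a : A) : pmap v Prod.fst a = ∑ c, v (a, c) := by
  unfold pmap
  rw [Fintype.sum_prod_type, Finset.sum_comm]
  apply Finset.sum_congr rfl
  intro c _
  rw [Finset.sum_ite_eq']
  simp

lemma pmap_pair_le {S U V : Type*} [Fintype S] [Fintype U] [DecidableEq U]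
    [Fintype V] [DecidableEq V] (q : S → ℝ) (hq0 : ∀ s, 0 ≤ q s)
    (g : S → U) (h : S → V) (a : U) (c : V) :
    pmap q (fun s => (g s, h s)) (a, c) ≤ pmap q h c := by
  have h1 : pmap q h c = ∑ a' : U, pmap q (fun s => (g s, h s)) (a', c) := by
    rw [← pmap_prod_snd (pmap q (fun s => (g s, h s))) c]
    exact (congrFun (pmap_pmap q (fun s => (g s, h s)) Prod.snd) c).symm
  rw [h1]
  exact Finset.single_le_sum (fun a' _ => pmap_nonneg hq0 (fun s => (g s, h s)) (a', c)) (Finset.mem_univ a)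

/-- Entropy of the uniform distribution on a set of size `2^ℓ`. -/
lemma entPMF_unif {A : Type*} [Fintype A] (ℓ : ℕ) (p : A → ℝ)
    (hcard : Fintype.card A = 2 ^ ℓ) (hp : ∀ a, p a = ((2 : ℝ) ^ ℓ)⁻¹) :
    entPMF p = ℓ := by
  unfold entPMF
  have hlog : Real.logb 2 (((2 : ℝ) ^ ℓ)⁻¹) = -ℓ := by
    rw [Real.logb_inv, Real.logb_pow, Real.logb_self_eq_one (by norm_num)]
    simp
  rw [Finset.sum_congr rfl fun a _ => by rw [hp a, hlog]]
  rw [Finset.sum_const, Finset.card_univ, hcard, nsmul_eq_mul]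
  push_cast
  have h2 : ((2 : ℝ) ^ ℓ) ≠ 0 := by positivity
  field_simp

/-- Entropy of a Bernoulli distribution. -/
lemma entPMF_bool (p : Bool → ℝ) (Ps : ℝ) (ht : p true = Ps) (hsum : ∑ b, p b = 1) :
    entPMF p = binEnt Ps := by
  have hb : p false = 1 - Ps := by
    rw [Fintype.sum_bool, ht] at hsum
    linarith
  unfold entPMF binEnt
  rw [Fintype.sum_bool, hb, ht]
  ring

/-- H(A,B) = H(A) + H(B) for independent A, B. -/
lemma entPMF_indep {A B : Type*} [Fintype A] [DecidableEq A] [Fintype B] [DecidableEq B]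
    (w : A × B → ℝ) (hw0 : ∀ x, 0 ≤ w x) (hw1 : ∑ x, w x = 1)
    (hInd : ∀ x : A × B, w x = pmap w Prod.fst x.1 * pmap w Prod.snd x.2) :
    entPMF w = entPMF (pmap w Prod.fst) + entPMF (pmap w Prod.snd) := by
  set pA := pmap w Prod.fst with hpA
  set pB := pmap w Prod.snd with hpB
  have split : ∑ x, w x * Real.logb 2 (w x)
      = ∑ x : A × B, w x * Real.logb 2 (pA x.1) + ∑ x : A × B, w x * Real.logb 2 (pB x.2) := by
    rw [← Finset.sum_add_distrib]
    apply Finset.sum_congr rfl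
    intro x _
    rcases eq_or_lt_of_le (hw0 x) with h0 | hpos
    · rw [← h0]; ring
    · have h1 : pA x.1 ≠ 0 := ne_of_gt (lt_of_lt_of_le hpos (le_pmap_self hw0 Prod.fst x))
      have h2 : pB x.2 ≠ 0 := ne_of_gt (lt_of_lt_of_le hpos (le_pmap_self hw0 Prod.snd x))
      rw [hInd x, Real.logb_mul h1 h2, ← hInd x]
      ring
  have e1 : ∑ x : A × B, w x * Real.logb 2 (pA x.1)
      = ∑ a : A, pA a * Real.logb 2 (pA a) :=
    sum_mul_comp w Prod.fst (fun a => Real.logb 2 (pA a))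
  have e2 : ∑ x : A × B, w x * Real.logb 2 (pB x.2)
      = ∑ b : B, pB b * Real.logb 2 (pB b) :=
    sum_mul_comp w Prod.snd (fun b => Real.logb 2 (pB b))
  unfold entPMF
  rw [split, e1, e2]
  ring

/-- H(A,B,C) + H(C) = H(A,C) + H(B,C) under conditional independence. -/
lemma entPMF_condIndep {A B C : Type*} [Fintype A] [DecidableEq A] [Fintype B] [DecidableEq B]
    [Fintype C] [DecidableEq C] (w : A × B × C → ℝ) (hw0 : ∀ x, 0 ≤ w x)
    (hCI : ∀ x : A × B × C,
      w x * pmap w (fun x => x.2.2) x.2.2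
        = pmap w (fun x => (x.1, x.2.2)) (x.1, x.2.2) * pmap w (fun x => x.2) x.2) :
    entPMF w + entPMF (pmap w (fun x => x.2.2))
      = entPMF (pmap w (fun x => (x.1, x.2.2))) + entPMF (pmap w (fun x => x.2)) := by
  set pAC := pmap w (fun x : A × B × C => (x.1, x.2.2)) with hpAC
  set pBC := pmap w (fun x : A × B × C => x.2) with hpBC
  set pC := pmap w (fun x : A × B × C => x.2.2) with hpC
  have split : ∑ x, w x * Real.logb 2 (w x) + ∑ x : A × B × C, w x * Real.logb 2 (pC x.2.2)
      = ∑ x : A × B × C, w x * Real.logb 2 (pAC (x.1, x.2.2))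
        + ∑ x : A × B × C, w x * Real.logb 2 (pBC x.2) := by
    rw [← Finset.sum_add_distrib, ← Finset.sum_add_distrib]
    apply Finset.sum_congr rfl
    intro x _
    rcases eq_or_lt_of_le (hw0 x) with h0 | hpos
    · rw [← h0]; ring
    · have h1 : pAC (x.1, x.2.2) ≠ 0 :=
        ne_of_gt (lt_of_lt_of_le hpos (le_pmap_self hw0 (fun x : A × B × C => (x.1, x.2.2)) x))
      have h2 : pBC x.2 ≠ 0 :=
        ne_of_gt (lt_of_lt_of_le hpos (le_pmap_self hw0 (fun x : A × B × C => x.2) x))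
      have h3 : pC x.2.2 ≠ 0 :=
        ne_of_gt (lt_of_lt_of_le hpos (le_pmap_self hw0 (fun x : A × B × C => x.2.2) x))
      have hlog : Real.logb 2 (w x * pC x.2.2) = Real.logb 2 (pAC (x.1, x.2.2) * pBC x.2) := by
        rw [hCI x]
      rw [Real.logb_mul (ne_of_gt hpos) h3, Real.logb_mul h1 h2] at hlog
      nlinarith [hlog]
  have e1 : ∑ x : A × B × C, w x * Real.logb 2 (pAC (x.1, x.2.2))
      = ∑ y : A × C, pAC y * Real.logb 2 (pAC y) :=
    sum_mul_comp w (fun x : A × B × C => (x.1, x.2.2)) (fun y => Real.logb 2 (pAC y))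
  have e2 : ∑ x : A × B × C, w x * Real.logb 2 (pBC x.2)
      = ∑ y : B × C, pBC y * Real.logb 2 (pBC y) :=
    sum_mul_comp w (fun x : A × B × C => x.2) (fun y => Real.logb 2 (pBC y))
  have e3 : ∑ x : A × B × C, w x * Real.logb 2 (pC x.2.2)
      = ∑ c : C, pC c * Real.logb 2 (pC c) :=
    sum_mul_comp w (fun x : A × B × C => x.2.2) (fun c => Real.logb 2 (pC c))
  unfold entPMF
  rw [← e1, ← e2, ← e3]
  linarith [split]

end Ent

/-- Master pmf-level statement. -/
lemma master {S 𝒦 𝒯 𝒳 𝒴 : Type*} [Fintype S]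
    [Fintype 𝒦] [DecidableEq 𝒦] [Fintype 𝒯] [DecidableEq 𝒯]
    [Fintype 𝒳] [DecidableEq 𝒳] [Fintype 𝒴] [DecidableEq 𝒴]
    (ℓ : ℕ) (hℓ : 1 ≤ ℓ) (hcard : Fintype.card 𝒦 = 2 ^ ℓ)
    (q : S → ℝ) (hq0 : ∀ s, 0 ≤ q s) (hq1 : ∑ s, q s = 1)
    (gK : S → 𝒦) (gT : S → 𝒯) (gX : S → 𝒳) (gY : S → 𝒴) (φ : 𝒴 → 𝒯 → 𝒦)
    (hunif : ∀ k, pmap q gK k = ((2 : ℝ) ^ ℓ)⁻¹)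
    (hKT : ∀ k t, pmap q (fun s => (gK s, gT s)) (k, t) = pmap q gK k * pmap q gT t)
    (hCI : ∀ (k : 𝒦) (y : 𝒴) (c : 𝒳 × 𝒯),
      pmap q (fun s => (gK s, gY s, gX s, gT s)) (k, y, c)
        * pmap q (fun s => (gX s, gT s)) c
      = pmap q (fun s => (gK s, gX s, gT s)) (k, c)
        * pmap q (fun s => (gY s, gX s, gT s)) (y, c))
    (Ps : ℝ) (hPs : pmap q (fun s => decide (φ (gY s) (gT s) = gK s)) true = Ps) :
    fP ℓ Ps ≤ entPMF (pmap q (fun s => (gX s, gT s))) + entPMF (pmap q (fun s => (gY s, gT s)))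
      - entPMF (pmap q (fun s => (gX s, gY s, gT s))) - entPMF (pmap q gT) := by
  have h2l : (2 : ℝ) ≤ 2 ^ ℓ := by
    calc (2 : ℝ) = 2 ^ 1 := (pow_one 2).symm
      _ ≤ 2 ^ ℓ := pow_le_pow_right₀ (by norm_num) hℓ
  set gH : S → 𝒦 := fun s => φ (gY s) (gT s) with hgH
  set gE : S → Bool := fun s => decide (φ (gY s) (gT s) = gK s) with hgE
  -- (1) H(K) = ℓ
  have HK : entPMF (pmap q gK) = ℓ := entPMF_unif ℓ _ hcard hunif
  -- (2a) H(K, E, K̂) = H(K, K̂)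
  have f1 : entPMF (pmap q (fun s => (gK s, gE s, gH s)))
      = entPMF (pmap q (fun s => (gK s, gH s))) := by
    have hinj : Function.Injective
        (fun p : 𝒦 × 𝒦 => (p.1, decide (p.2 = p.1), p.2)) := by
      rintro ⟨a, b⟩ ⟨a', b'⟩ h
      simp only [Prod.mk.injEq] at h
      simp [h.1, h.2.2]
    exact entPMF_pmap_comp_inj q (fun s => (gK s, gH s))
      (fun p : 𝒦 × 𝒦 => (p.1, decide (p.2 = p.1), p.2)) hinj
  -- (2b) H(E, K̂) ≤ H(E) + H(K̂)
  have f2 : entPMF (pmap q (fun s => (gE s, gH s)))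
      ≤ entPMF (pmap q gE) + entPMF (pmap q gH) := by
    have h := entPMF_subadd (pmap q (fun s => (gE s, gH s)))
      (pmap_nonneg hq0 _) (by rw [sum_pmap, hq1])
    simp only [pmap_pmap] at h
    exact h
  -- sums to one for E-marginal
  have hEsum : pmap q gE true + pmap q gE false = 1 := by
    have := sum_pmap q gE
    rw [hq1, Fintype.sum_bool] at this
    linarith
  have hEfalse : pmap q gE false = 1 - Ps := by
    have : pmap q gE true = Ps := hPs
    linarith
  -- (2c) Fano counting bound
  have f3 : entPMF (pmap q (fun s => (gK s, gE s, gH s)))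
      ≤ entPMF (pmap q (fun s => (gE s, gH s)))
        + (1 - Ps) * Real.logb 2 ((2 : ℝ) ^ ℓ - 1) := by
    set w := pmap q (fun s => (gK s, gE s, gH s)) with hw
    set N : Bool × 𝒦 → ℝ := fun b => if b.1 then 1 else (2 : ℝ) ^ ℓ - 1 with hN
    have hN1 : ∀ b, 1 ≤ N b := by
      intro b
      rw [hN]
      dsimp only
      split
      · exact le_refl 1
      · linarith
    have hcount : ∀ b : Bool × 𝒦,
        ((Finset.univ.filter fun a => w (a, b) ≠ 0).card : ℝ) ≤ N b := by
      rintro ⟨e, h⟩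
      cases e
      · -- e = false : the set is contained in univ.erase h
        have hsub : (Finset.univ.filter fun a => w (a, false, h) ≠ 0)
            ⊆ Finset.univ.erase h := by
          intro k hk
          rw [Finset.mem_filter] at hk
          obtain ⟨s, hqs, hgs⟩ := pmap_pos_elim hk.2
          have h1 : gK s = k := congrArg Prod.fst hgs
          have h2 : gE s = false := congrArg (fun p => p.2.1) hgs
          have h3 : gH s = h := congrArg (fun p => p.2.2) hgs
          rw [hgE] at h2
          simp only [decide_eq_false_iff_not] at h2
          apply Finset.mem_erase.2
          refine ⟨?_, Finset.mem_univ k⟩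
          intro hkh
          apply h2
          calc φ (gY s) (gT s) = gH s := rfl
            _ = h := h3
            _ = k := hkh.symm
            _ = gK s := h1.symm
        have hcard2 : (Finset.univ.filter fun a => w (a, false, h) ≠ 0).card
            ≤ Fintype.card 𝒦 - 1 := by
          calc _ ≤ (Finset.univ.erase h).card := Finset.card_le_card hsub
            _ = Fintype.card 𝒦 - 1 := by
                rw [Finset.card_erase_of_mem (Finset.mem_univ h), Finset.card_univ]
        have : ((Finset.univ.filter fun a => w (a, false, h) ≠ 0).card : ℝ)
            ≤ ((Fintype.card 𝒦 - 1 : ℕ) : ℝ) := by exact_mod_cast hcard2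
        calc ((Finset.univ.filter fun a => w (a, false, h) ≠ 0).card : ℝ)
            ≤ ((Fintype.card 𝒦 - 1 : ℕ) : ℝ) := this
          _ = (2 : ℝ) ^ ℓ - 1 := by
              rw [hcard]
              have h1 : 1 ≤ 2 ^ ℓ := Nat.one_le_two_pow
              push_cast [h1]
              ring
          _ = N (false, h) := by simp [hN]
      · -- e = true : the set is contained in {h}
        have hsub : (Finset.univ.filter fun a => w (a, true, h) ≠ 0) ⊆ {h} := by
          intro k hk
          rw [Finset.mem_filter] at hk
          obtain ⟨s, hqs, hgs⟩ := pmap_pos_elim hk.2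
          have h1 : gK s = k := congrArg Prod.fst hgs
          have h2 : gE s = true := congrArg (fun p => p.2.1) hgs
          have h3 : gH s = h := congrArg (fun p => p.2.2) hgs
          rw [hgE] at h2
          simp only [decide_eq_true_eq] at h2
          have : k = h := by rw [← h1, ← h3]; exact h2.symm
          simp [this]
        have : (Finset.univ.filter fun a => w (a, true, h) ≠ 0).card ≤ 1 := by
          calc _ ≤ ({h} : Finset 𝒦).card := Finset.card_le_card hsub
            _ = 1 := Finset.card_singleton h
        calc ((Finset.univ.filter fun a => w (a, true, h) ≠ 0).card : ℝ) ≤ 1 := by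
              exact_mod_cast this
          _ = N (true, h) := by simp [hN]
    have h := entPMF_fano_count w (pmap_nonneg hq0 _) (by rw [hw, sum_pmap, hq1]) N hN1 hcount
    have hmarg : pmap w Prod.snd = pmap q (fun s => (gE s, gH s)) := by
      rw [hw, pmap_pmap]
    rw [hmarg] at h
    have hsumN : ∑ b : Bool × 𝒦, pmap q (fun s => (gE s, gH s)) b * Real.logb 2 (N b)
        = (1 - Ps) * Real.logb 2 ((2 : ℝ) ^ ℓ - 1) := by
      rw [Fintype.sum_prod_type, Fintype.sum_bool]
      have htrue : ∀ h : 𝒦, pmap q (fun s => (gE s, gH s)) (true, h) * Real.logb 2 (N (true, h))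
          = 0 := by
        intro h
        simp [hN]
      have hfalse : ∀ h : 𝒦, pmap q (fun s => (gE s, gH s)) (false, h) * Real.logb 2 (N (false, h))
          = pmap q (fun s => (gE s, gH s)) (false, h) * Real.logb 2 ((2 : ℝ) ^ ℓ - 1) := by
        intro h
        simp [hN]
      rw [Finset.sum_congr rfl fun h _ => htrue h, Finset.sum_congr rfl fun h _ => hfalse h]
      rw [← Finset.sum_mul]
      have hm : ∑ h : 𝒦, pmap q (fun s => (gE s, gH s)) (false, h) = 1 - Ps := by
        have e1 : pmap (pmap q (fun s => (gE s, gH s))) Prod.fst false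
            = ∑ h : 𝒦, pmap q (fun s => (gE s, gH s)) (false, h) :=
          pmap_prod_fst (pmap q (fun s => (gE s, gH s))) false
        rw [pmap_pmap] at e1
        have e2 : pmap q (fun s => gE s) false = 1 - Ps := hEfalse
        rw [← e1, e2]
      rw [hm]
      simp
    rw [hsumN] at h
    exact h
  -- (2d) H(E) = binEnt Ps
  have hE : entPMF (pmap q gE) = binEnt Ps :=
    entPMF_bool _ Ps hPs (by rw [sum_pmap, hq1])
  -- (4) DPI : H(K,Y,T) + H(K̂) ≤ H(K,K̂) + H(Y,T)
  have d1 : entPMF (pmap q (fun s => (gK s, gY s, gT s))) + entPMF (pmap q gH)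
      ≤ entPMF (pmap q (fun s => (gK s, gH s)))
        + entPMF (pmap q (fun s => (gY s, gT s))) := by
    have h := entPMF_submod (pmap q (fun s => (gK s, (gY s, gT s), gH s)))
      (pmap_nonneg hq0 _) (by rw [sum_pmap, hq1])
    simp only [pmap_pmap] at h
    have d2 : entPMF (pmap q (fun s => (gK s, (gY s, gT s), gH s)))
        = entPMF (pmap q (fun s => (gK s, gY s, gT s))) := by
      have hinj : Function.Injective
          (fun p : 𝒦 × 𝒴 × 𝒯 => (p.1, (p.2.1, p.2.2), φ p.2.1 p.2.2)) := by
        rintro ⟨a, b, c⟩ ⟨a', b', c'⟩ hh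
        simp only [Prod.mk.injEq] at hh
        simp [hh.1, hh.2.1.1, hh.2.1.2]
      exact entPMF_pmap_comp_inj q (fun s => (gK s, gY s, gT s))
        (fun p : 𝒦 × 𝒴 × 𝒯 => (p.1, (p.2.1, p.2.2), φ p.2.1 p.2.2)) hinj
    have d3 : entPMF (pmap q (fun s => ((gY s, gT s), gH s)))
        = entPMF (pmap q (fun s => (gY s, gT s))) := by
      have hinj : Function.Injective
          (fun p : 𝒴 × 𝒯 => ((p.1, p.2), φ p.1 p.2)) := by
        rintro ⟨b, c⟩ ⟨b', c'⟩ hh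
        simp only [Prod.mk.injEq] at hh
        simp [hh.1.1, hh.1.2]
      exact entPMF_pmap_comp_inj q (fun s => (gY s, gT s))
        (fun p : 𝒴 × 𝒯 => ((p.1, p.2), φ p.1 p.2)) hinj
    have h' : entPMF (pmap q (fun s => (gK s, (gY s, gT s), gH s))) + entPMF (pmap q gH)
        ≤ entPMF (pmap q (fun s => (gK s, gH s)))
          + entPMF (pmap q (fun s => ((gY s, gT s), gH s))) := h
    rw [d2, d3] at h'
    exact h'
  -- (5) independence : H(K,T) = H(K) + H(T)
  have i1 : entPMF (pmap q (fun s => (gK s, gT s)))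
      = entPMF (pmap q gK) + entPMF (pmap q gT) := by
    have hInd : ∀ x : 𝒦 × 𝒯, pmap q (fun s => (gK s, gT s)) x
        = pmap (pmap q (fun s => (gK s, gT s))) Prod.fst x.1
          * pmap (pmap q (fun s => (gK s, gT s))) Prod.snd x.2 := by
      intro x
      rw [pmap_pmap, pmap_pmap]
      exact hKT x.1 x.2
    have h := entPMF_indep (pmap q (fun s => (gK s, gT s)))
      (pmap_nonneg hq0 _) (by rw [sum_pmap, hq1]) hInd
    simp only [pmap_pmap] at h
    exact h
  -- (7a) conditional independence identity
  have c1 : entPMF (pmap q (fun s => (gK s, gY s, gX s, gT s)))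
        + entPMF (pmap q (fun s => (gX s, gT s)))
      = entPMF (pmap q (fun s => (gK s, gX s, gT s)))
        + entPMF (pmap q (fun s => (gY s, gX s, gT s))) := by
    have hCI' : ∀ x : 𝒦 × 𝒴 × 𝒳 × 𝒯,
        pmap q (fun s => (gK s, gY s, gX s, gT s)) x
          * pmap (pmap q (fun s => (gK s, gY s, gX s, gT s))) (fun x => x.2.2) x.2.2
        = pmap (pmap q (fun s => (gK s, gY s, gX s, gT s))) (fun x => (x.1, x.2.2)) (x.1, x.2.2)
          * pmap (pmap q (fun s => (gK s, gY s, gX s, gT s))) (fun x => x.2) x.2 := by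
      intro x
      rw [pmap_pmap, pmap_pmap, pmap_pmap]
      exact hCI x.1 x.2.1 x.2.2
    have h := entPMF_condIndep (pmap q (fun s => (gK s, gY s, gX s, gT s)))
      (pmap_nonneg hq0 _) hCI'
    simp only [pmap_pmap] at h
    exact h
  -- (7b) I(X;Y|K,T) ≥ 0
  have c2 : entPMF (pmap q (fun s => (gX s, gY s, gK s, gT s)))
        + entPMF (pmap q (fun s => (gK s, gT s)))
      ≤ entPMF (pmap q (fun s => (gX s, gK s, gT s)))
        + entPMF (pmap q (fun s => (gY s, gK s, gT s))) := by
    have h := entPMF_submod (pmap q (fun s => (gX s, gY s, gK s, gT s)))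
      (pmap_nonneg hq0 _) (by rw [sum_pmap, hq1])
    simp only [pmap_pmap] at h
    exact h
  -- permutation equalities
  have p1 : entPMF (pmap q (fun s => (gX s, gY s, gK s, gT s)))
      = entPMF (pmap q (fun s => (gK s, gY s, gX s, gT s))) := by
    have hinj : Function.Injective
        (fun p : 𝒦 × 𝒴 × 𝒳 × 𝒯 => (p.2.2.1, p.2.1, p.1, p.2.2.2)) := by
      rintro ⟨a, b, c, d⟩ ⟨a', b', c', d'⟩ hh
      simp only [Prod.mk.injEq] at hh
      simp [hh.1, hh.2.1, hh.2.2.1, hh.2.2.2]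
    exact entPMF_pmap_comp_inj q (fun s => (gK s, gY s, gX s, gT s))
      (fun p : 𝒦 × 𝒴 × 𝒳 × 𝒯 => (p.2.2.1, p.2.1, p.1, p.2.2.2)) hinj
  have p2 : entPMF (pmap q (fun s => (gX s, gY s, gT s)))
      = entPMF (pmap q (fun s => (gY s, gX s, gT s))) := by
    have hinj : Function.Injective
        (fun p : 𝒴 × 𝒳 × 𝒯 => (p.2.1, p.1, p.2.2)) := by
      rintro ⟨a, b, c⟩ ⟨a', b', c'⟩ hh
      simp only [Prod.mk.injEq] at hh
      simp [hh.1, hh.2.1, hh.2.2]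
    exact entPMF_pmap_comp_inj q (fun s => (gY s, gX s, gT s))
      (fun p : 𝒴 × 𝒳 × 𝒯 => (p.2.1, p.1, p.2.2)) hinj
  have p3 : entPMF (pmap q (fun s => (gK s, gY s, gT s)))
      = entPMF (pmap q (fun s => (gY s, gK s, gT s))) := by
    have hinj : Function.Injective
        (fun p : 𝒴 × 𝒦 × 𝒯 => (p.2.1, p.1, p.2.2)) := by
      rintro ⟨a, b, c⟩ ⟨a', b', c'⟩ hh
      simp only [Prod.mk.injEq] at hh
      simp [hh.1, hh.2.1, hh.2.2]
    exact entPMF_pmap_comp_inj q (fun s => (gY s, gK s, gT s))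
      (fun p : 𝒴 × 𝒦 × 𝒯 => (p.2.1, p.1, p.2.2)) hinj
  have p4 : entPMF (pmap q (fun s => (gX s, gK s, gT s)))
      = entPMF (pmap q (fun s => (gK s, gX s, gT s))) := by
    have hinj : Function.Injective
        (fun p : 𝒦 × 𝒳 × 𝒯 => (p.2.1, p.1, p.2.2)) := by
      rintro ⟨a, b, c⟩ ⟨a', b', c'⟩ hh
      simp only [Prod.mk.injEq] at hh
      simp [hh.1, hh.2.1, hh.2.2]
    exact entPMF_pmap_comp_inj q (fun s => (gK s, gX s, gT s))
      (fun p : 𝒦 × 𝒳 × 𝒯 => (p.2.1, p.1, p.2.2)) hinj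
  -- final assembly
  show (ℓ : ℝ) - binEnt Ps - (1 - Ps) * Real.logb 2 ((2 : ℝ) ^ ℓ - 1)
      ≤ entPMF (pmap q (fun s => (gX s, gT s))) + entPMF (pmap q (fun s => (gY s, gT s)))
        - entPMF (pmap q (fun s => (gX s, gY s, gT s))) - entPMF (pmap q gT)
  linarith [f1, f2, f3, hE, HK, d1, i1, c1, c2, p1, p2, p3, p4]

section Bridge
variable {Ω : Type*} [MeasurableSpace Ω]

lemma pr_fiber (μ : Measure Ω) [IsFiniteMeasure μ] {S U : Type*} [Fintype S] [DecidableEq S]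
    [Fintype U] [DecidableEq U] (Z : Ω → S) (hZ : ∀ s, MeasurableSet (Z ⁻¹' {s}))
    (g : S → U) (u : U) :
    pr μ (fun ω => g (Z ω)) u = pmap (fun s => pr μ Z s) g u := by
  unfold pr pmap
  have hset : (fun ω => g (Z ω)) ⁻¹' {u}
      = ⋃ s ∈ Finset.univ.filter (fun s => g s = u), Z ⁻¹' {s} := by
    ext ω
    simp only [Set.mem_preimage, Set.mem_singleton_iff, Set.mem_iUnion,
      Finset.mem_filter, Finset.mem_univ, true_and]
    constructor
    · intro h
      exact ⟨Z ω, h, rfl⟩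
    · rintro ⟨s, hs, hzs⟩
      rw [hzs]
      exact hs
  rw [hset, measure_biUnion_finset ?disj (fun s _ => hZ s)]
  · rw [ENNReal.toReal_sum (fun s _ => measure_ne_top μ _), Finset.sum_filter]
  case disj =>
    intro a _ b _ hab
    apply Set.disjoint_left.mpr
    intro ω hωa hωb
    simp only [Set.mem_preimage, Set.mem_singleton_iff] at hωa hωb
    exact hab (by rw [← hωa, ← hωb])

lemma pr_total (μ : Measure Ω) [IsProbabilityMeasure μ] {S : Type*} [Fintype S]
    [DecidableEq S] (Z : Ω → S) (hZ : ∀ s, MeasurableSet (Z ⁻¹' {s})) :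
    ∑ s, pr μ Z s = 1 := by
  have h := pr_fiber μ Z hZ (fun _ => ()) ()
  have hL : pr μ (fun _ : Ω => ()) () = 1 := by
    unfold pr
    rw [show ((fun _ : Ω => ()) ⁻¹' {()}) = Set.univ from by ext; simp]
    simp
  have hR : pmap (fun s => pr μ Z s) (fun _ => ()) () = ∑ s, pr μ Z s := by
    unfold pmap
    apply Finset.sum_congr rfl
    intro s _
    rw [if_pos rfl]
  rw [← hR, ← h, hL]

end Bridge

/-- Fano-type bound `f_P(P_s) ≤ I(X;Y|T)` when `Y ⫫ K | (X,T)`. -/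
theorem stmt13 (ℓ : ℕ) (hℓ : 1 ≤ ℓ)
    {Ω : Type*} [MeasurableSpace Ω] (μ : Measure Ω) [IsProbabilityMeasure μ]
    {𝒦 𝒯 𝒳 𝒴 : Type*}
    [Fintype 𝒦] [Nonempty 𝒦] [MeasurableSpace 𝒦] [MeasurableSingletonClass 𝒦]
    [Fintype 𝒯] [Nonempty 𝒯] [MeasurableSpace 𝒯] [MeasurableSingletonClass 𝒯]
    [Fintype 𝒳] [Nonempty 𝒳] [MeasurableSpace 𝒳] [MeasurableSingletonClass 𝒳]
    [Fintype 𝒴] [Nonempty 𝒴] [MeasurableSpace 𝒴] [MeasurableSingletonClass 𝒴]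
    (K : Ω → 𝒦) (T : Ω → 𝒯) (X : Ω → 𝒳) (Y : Ω → 𝒴)
    (hKm : Measurable K) (hTm : Measurable T) (hXm : Measurable X) (hYm : Measurable Y)
    -- K is uniformly distributed on a set of cardinality 2^ℓ
    (hcard : Fintype.card 𝒦 = 2 ^ ℓ)
    (hunif : ∀ k, pr μ K k = ((2 : ℝ) ^ ℓ)⁻¹)
    -- K is independent of T
    (hKT : IndepRV μ K T)
    -- Y is conditionally independent of K given (X,T)
    (hYK : CondIndepGiven μ Y K (fun ω => (X ω, T ω)))
    -- K̂ = φ(Y,T)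
    (φ : 𝒴 → 𝒯 → 𝒦) (Khat : Ω → 𝒦) (hKhat : ∀ ω, Khat ω = φ (Y ω) (T ω))
    -- success rate
    (Ps : ℝ) (hPs : Ps = (μ {ω | Khat ω = K ω}).toReal) :
    fP ℓ Ps ≤ cmi μ X Y T := by
  letI : DecidableEq 𝒦 := Classical.decEq _
  letI : DecidableEq 𝒯 := Classical.decEq _
  letI : DecidableEq 𝒳 := Classical.decEq _
  letI : DecidableEq 𝒴 := Classical.decEq _
  set Z : Ω → 𝒦 × 𝒯 × 𝒳 × 𝒴 := fun ω => (K ω, T ω, X ω, Y ω) with hZdef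
  have hZmeas : Measurable Z := hKm.prodMk (hTm.prodMk (hXm.prodMk hYm))
  have hZ : ∀ s : 𝒦 × 𝒯 × 𝒳 × 𝒴, MeasurableSet (Z ⁻¹' {s}) :=
    fun s => hZmeas (MeasurableSet.singleton s)
  set q : 𝒦 × 𝒯 × 𝒳 × 𝒴 → ℝ := fun s => pr μ Z s with hqdef
  have hq0 : ∀ s, 0 ≤ q s := fun s => ENNReal.toReal_nonneg
  have hq1 : ∑ s, q s = 1 := pr_total μ Z hZ
  -- bridges between `pmap q` and `pr μ`
  have bK : ∀ k, pmap q (fun s : 𝒦 × 𝒯 × 𝒳 × 𝒴 => s.1) k = pr μ K k :=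
    fun k => (pr_fiber μ Z hZ (fun s => s.1) k).symm
  have bT : ∀ t, pmap q (fun s : 𝒦 × 𝒯 × 𝒳 × 𝒴 => s.2.1) t = pr μ T t :=
    fun t => (pr_fiber μ Z hZ (fun s => s.2.1) t).symm
  have bKT : ∀ u : 𝒦 × 𝒯, pmap q (fun s : 𝒦 × 𝒯 × 𝒳 × 𝒴 => (s.1, s.2.1)) u
      = pr μ (fun ω => (K ω, T ω)) u :=
    fun u => (pr_fiber μ Z hZ (fun s => (s.1, s.2.1)) u).symm
  have bXT : ∀ c : 𝒳 × 𝒯, pmap q (fun s : 𝒦 × 𝒯 × 𝒳 × 𝒴 => (s.2.2.1, s.2.1)) c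
      = pr μ (fun ω => (X ω, T ω)) c :=
    fun c => (pr_fiber μ Z hZ (fun s => (s.2.2.1, s.2.1)) c).symm
  have bKXT : ∀ u : 𝒦 × 𝒳 × 𝒯, pmap q (fun s : 𝒦 × 𝒯 × 𝒳 × 𝒴 => (s.1, s.2.2.1, s.2.1)) u
      = pr μ (fun ω => (K ω, X ω, T ω)) u :=
    fun u => (pr_fiber μ Z hZ (fun s => (s.1, s.2.2.1, s.2.1)) u).symm
  have bYXT : ∀ u : 𝒴 × 𝒳 × 𝒯, pmap q (fun s : 𝒦 × 𝒯 × 𝒳 × 𝒴 => (s.2.2.2, s.2.2.1, s.2.1)) u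
      = pr μ (fun ω => (Y ω, X ω, T ω)) u :=
    fun u => (pr_fiber μ Z hZ (fun s => (s.2.2.2, s.2.2.1, s.2.1)) u).symm
  have bKYXT : ∀ u : 𝒦 × 𝒴 × 𝒳 × 𝒯,
      pmap q (fun s : 𝒦 × 𝒯 × 𝒳 × 𝒴 => (s.1, s.2.2.2, s.2.2.1, s.2.1)) u
      = pr μ (fun ω => (K ω, Y ω, X ω, T ω)) u :=
    fun u => (pr_fiber μ Z hZ (fun s => (s.1, s.2.2.2, s.2.2.1, s.2.1)) u).symm
  -- hypotheses of the master lemma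
  have hunif' : ∀ k, pmap q (fun s : 𝒦 × 𝒯 × 𝒳 × 𝒴 => s.1) k = ((2 : ℝ) ^ ℓ)⁻¹ :=
    fun k => (bK k).trans (hunif k)
  have hKT' : ∀ k t, pmap q (fun s : 𝒦 × 𝒯 × 𝒳 × 𝒴 => (s.1, s.2.1)) (k, t)
      = pmap q (fun s : 𝒦 × 𝒯 × 𝒳 × 𝒴 => s.1) k * pmap q (fun s : 𝒦 × 𝒯 × 𝒳 × 𝒴 => s.2.1) t := by
    intro k t
    rw [bKT, bK, bT]
    exact hKT k t
  have hCI' : ∀ (k : 𝒦) (y : 𝒴) (c : 𝒳 × 𝒯),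
      pmap q (fun s : 𝒦 × 𝒯 × 𝒳 × 𝒴 => (s.1, s.2.2.2, s.2.2.1, s.2.1)) (k, y, c)
        * pmap q (fun s : 𝒦 × 𝒯 × 𝒳 × 𝒴 => (s.2.2.1, s.2.1)) c
      = pmap q (fun s : 𝒦 × 𝒯 × 𝒳 × 𝒴 => (s.1, s.2.2.1, s.2.1)) (k, c)
        * pmap q (fun s : 𝒦 × 𝒯 × 𝒳 × 𝒴 => (s.2.2.2, s.2.2.1, s.2.1)) (y, c) := by
    intro k y c
    by_cases hc : 0 < pmap q (fun s : 𝒦 × 𝒯 × 𝒳 × 𝒴 => (s.2.2.1, s.2.1)) c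
    · rw [bKYXT, bXT, bKXT, bYXT]
      exact hYK k y c (by rw [← bXT c]; exact hc)
    · have h0 : pmap q (fun s : 𝒦 × 𝒯 × 𝒳 × 𝒴 => (s.2.2.1, s.2.1)) c = 0 :=
        le_antisymm (le_of_not_gt hc) (pmap_nonneg hq0 _ _)
      have hKC0 : pmap q (fun s : 𝒦 × 𝒯 × 𝒳 × 𝒴 => (s.1, s.2.2.1, s.2.1)) (k, c) = 0 := by
        have hle := pmap_pair_le q hq0 (fun s : 𝒦 × 𝒯 × 𝒳 × 𝒴 => s.1)
          (fun s : 𝒦 × 𝒯 × 𝒳 × 𝒴 => (s.2.2.1, s.2.1)) k c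
        exact le_antisymm (le_trans hle (le_of_eq h0)) (pmap_nonneg hq0 _ _)
      rw [h0, mul_zero, hKC0, zero_mul]
  have hPs' : pmap q (fun s : 𝒦 × 𝒯 × 𝒳 × 𝒴 => decide (φ s.2.2.2 s.2.1 = s.1)) true = Ps := by
    have bE : pmap q (fun s : 𝒦 × 𝒯 × 𝒳 × 𝒴 => decide (φ s.2.2.2 s.2.1 = s.1)) true
        = pr μ (fun ω => decide (φ (Y ω) (T ω) = K ω)) true :=
      (pr_fiber μ Z hZ (fun s : 𝒦 × 𝒯 × 𝒳 × 𝒴 => decide (φ s.2.2.2 s.2.1 = s.1)) true).symm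
    rw [bE, hPs]
    unfold pr
    rw [show ((fun ω => decide (φ (Y ω) (T ω) = K ω)) ⁻¹' {true}) = {ω | Khat ω = K ω} from by
      ext ω
      simp [Set.mem_preimage, hKhat ω]]
  have main := master ℓ hℓ hcard q hq0 hq1 (fun s => s.1) (fun s => s.2.1)
    (fun s => s.2.2.1) (fun s => s.2.2.2) φ hunif' hKT' hCI' Ps hPs'
  -- translate the goal
  have eXT : ent μ (fun ω => (X ω, T ω))
      = entPMF (pmap q (fun s : 𝒦 × 𝒯 × 𝒳 × 𝒴 => (s.2.2.1, s.2.1))) := by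
    unfold ent entPMF
    congr 1
    apply Finset.sum_congr rfl
    intro u _
    rw [show pr μ (fun ω => (X ω, T ω)) u
      = pmap q (fun s : 𝒦 × 𝒯 × 𝒳 × 𝒴 => (s.2.2.1, s.2.1)) u from
      pr_fiber μ Z hZ (fun s => (s.2.2.1, s.2.1)) u]
  have eYT : ent μ (fun ω => (Y ω, T ω))
      = entPMF (pmap q (fun s : 𝒦 × 𝒯 × 𝒳 × 𝒴 => (s.2.2.2, s.2.1))) := by
    unfold ent entPMF
    congr 1
    apply Finset.sum_congr rfl
    intro u _
    rw [show pr μ (fun ω => (Y ω, T ω)) u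
      = pmap q (fun s : 𝒦 × 𝒯 × 𝒳 × 𝒴 => (s.2.2.2, s.2.1)) u from
      pr_fiber μ Z hZ (fun s => (s.2.2.2, s.2.1)) u]
  have eXYT : ent μ (fun ω => (X ω, Y ω, T ω))
      = entPMF (pmap q (fun s : 𝒦 × 𝒯 × 𝒳 × 𝒴 => (s.2.2.1, s.2.2.2, s.2.1))) := by
    unfold ent entPMF
    congr 1
    apply Finset.sum_congr rfl
    intro u _
    rw [show pr μ (fun ω => (X ω, Y ω, T ω)) u
      = pmap q (fun s : 𝒦 × 𝒯 × 𝒳 × 𝒴 => (s.2.2.1, s.2.2.2, s.2.1)) u from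
      pr_fiber μ Z hZ (fun s => (s.2.2.1, s.2.2.2, s.2.1)) u]
  have eT : ent μ T = entPMF (pmap q (fun s : 𝒦 × 𝒯 × 𝒳 × 𝒴 => s.2.1)) := by
    unfold ent entPMF
    congr 1
    apply Finset.sum_congr rfl
    intro u _
    rw [show pr μ T u = pmap q (fun s : 𝒦 × 𝒯 × 𝒳 × 𝒴 => s.2.1) u from
      pr_fiber μ Z hZ (fun s => s.2.1) u]
  show fP ℓ Ps ≤ ent μ (fun ω => (X ω, T ω)) + ent μ (fun ω => (Y ω, T ω))
    - ent μ (fun ω => (X ω, Y ω, T ω)) - ent μ T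
  rw [eXT, eYT, eXYT, eT]
  exact main
end SCA
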